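/- If s, t ∈ Σ^n share at least one common symbol (there exists a ∈ Σ occurring in both s and t), then D(P(H(s) − H(t))) ≤ n − 1. -/

import Mathlib

def hist {n k : ℕ} (s : Fin n → Fin k) : Fin k → ℤ :=
  fun c => ((Finset.univ.filter (fun i => s i = c)).card : ℤ)

def psum {k : ℕ} (H : Fin k → ℤ) : Fin k → ℤ :=
  fun i => ∑ j ∈ Finset.Iic i, H j

lemma hist_nonneg {n k : ℕ} (s : Fin n → Fin k) (c : Fin k) : 0 ≤ hist s c :=
  Int.ofNat_nonneg _

lemma sum_hist_le {n k : ℕ} (s : Fin n → Fin k) (F : Finset (Fin k)) :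
    ∑ c ∈ F, hist s c ≤ (n : ℤ) := by
  have h1 : ∑ c ∈ F, hist s c ≤ ∑ c ∈ Finset.univ, hist s c :=
    Finset.sum_le_sum_of_subset_of_nonneg (Finset.subset_univ F)
      (fun c _ _ => hist_nonneg s c)
  have h2 : ∑ c ∈ (Finset.univ : Finset (Fin k)), hist s c = (n : ℤ) := by
    unfold hist
    have := Finset.card_eq_sum_card_fiberwise
      (f := s) (s := (Finset.univ : Finset (Fin n))) (t := Finset.univ)
      (fun x _ => Finset.mem_univ (s x))
    have h3 : ∑ c : Fin k, (Finset.filter (fun i => s i = c) Finset.univ).card = n := by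
      rw [← this]; simp
    exact_mod_cast h3
  linarith

lemma key_lemma {n k : ℕ} (s t : Fin n → Fin k) (a : Fin k)
    (ha : 1 ≤ hist s a) (A : Finset (Fin k)) (hA2 : a ∉ A → 1 ≤ hist t a) :
    ∑ c ∈ A, hist t c - ∑ c ∈ A, hist s c ≤ (n : ℤ) - 1 := by
  by_cases hA : a ∈ A
  · have h1 : hist s a ≤ ∑ c ∈ A, hist s c :=
      Finset.single_le_sum (fun c _ => hist_nonneg s c) hA
    have h2 := sum_hist_le t A
    linarith
  · have h1 : ∑ c ∈ insert a A, hist t c ≤ (n : ℤ) := sum_hist_le t _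
    rw [Finset.sum_insert hA] at h1
    have h2 : 0 ≤ ∑ c ∈ A, hist s c := Finset.sum_nonneg fun c _ => hist_nonneg s c
    have := hA2 hA
    linarith

lemma hist_pos {n k : ℕ} (s : Fin n → Fin k) (a : Fin k) (i : Fin n) (hi : s i = a) :
    1 ≤ hist s a := by
  unfold hist
  have : 0 < (Finset.univ.filter (fun j => s j = a)).card :=
    Finset.card_pos.mpr ⟨i, by simp [hi]⟩
  omega

theorem stmt7 {n k : ℕ} (hk : 2 ≤ k) (hn : 1 ≤ n) (s t : Fin n → Fin k)
    (h : ∃ a : Fin k, (∃ i, s i = a) ∧ (∃ j, t j = a)) :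
    ∀ i j : Fin k,
      psum (fun c => hist s c - hist t c) i -
      psum (fun c => hist s c - hist t c) j ≤ (n : ℤ) - 1 := by
  obtain ⟨a, ⟨i0, hs0⟩, ⟨j0, ht0⟩⟩ := h
  have has := hist_pos s a i0 hs0
  have hat := hist_pos t a j0 ht0
  intro i j
  unfold psum
  rcases le_total i j with hij | hij
  · have hsub : Finset.Iic i ⊆ Finset.Iic j := Finset.Iic_subset_Iic.mpr hij
    have hsd := Finset.sum_sdiff (f := fun c => hist s c - hist t c) hsub
    set A := Finset.Iic j \ Finset.Iic i with hAdef
    have hsplit : ∑ c ∈ A, (hist s c - hist t c)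
        = ∑ c ∈ A, hist s c - ∑ c ∈ A, hist t c := Finset.sum_sub_distrib _ _
    have hkey := key_lemma s t a has A (fun _ => hat)
    linarith
  · have hsub : Finset.Iic j ⊆ Finset.Iic i := Finset.Iic_subset_Iic.mpr hij
    have hsd := Finset.sum_sdiff (f := fun c => hist s c - hist t c) hsub
    set A := Finset.Iic i \ Finset.Iic j with hAdef
    have hsplit : ∑ c ∈ A, (hist s c - hist t c)
        = ∑ c ∈ A, hist s c - ∑ c ∈ A, hist t c := Finset.sum_sub_distrib _ _
    have hkey := key_lemma t s a hat A (fun _ => has)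
    linarith
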